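/- Let P, Q, and Pˢ be symmetric positive definite n×n real matrices, F an n×n real matrix, and z ∈ ℝⁿ. Define P⁺ = FPFᵀ + Q, G = PFᵀ(P⁺)⁻¹, 𝒫 = [[P, PFᵀ],[FP, P⁺]] (a 2n×2n block matrix), the 4n×2n block matrix A = [[I,0],[0,I],[0,I],[0,I]], the vector b = (0, z, z, 0) ∈ ℝ⁴ⁿ, and the block-diagonal weight W = blkdiag(𝒫⁻¹, −(P⁺)⁻¹, (Pˢ)⁻¹). Then M = AᵀWA is invertible and the pair δ* = (Gz, 0) ∈ ℝ²ⁿ is the unique solution of the stationarity (normal) equations AᵀWAδ + AᵀWb = 0 of the quadratic cost δ ↦ (1/2)(Aδ + b)ᵀW(Aδ + b). -/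

import Mathlib

open Matrix

/-- The central computation of the RTS smoother on Lie groups: with
`A = [[I,0],[0,I],[0,I],[0,I]]`, `b = (0, z, z, 0)` and
`W = blkdiag(Pjoint⁻¹, −(P⁺)⁻¹, (Pˢ)⁻¹)`, the matrix `M = AᵀWA` is invertible and
`δ* = (Gz, 0)` is the unique solution of the normal equations `AᵀWAδ + AᵀWb = 0`. -/
theorem stmt6 {n : ℕ} (P Q Ps F : Matrix (Fin n) (Fin n) ℝ)
    (hP : P.PosDef) (hQ : Q.PosDef) (hPs : Ps.PosDef) (z : Fin n → ℝ) :
    let Pp : Matrix (Fin n) (Fin n) ℝ := F * P * Fᵀ + Q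
    let G : Matrix (Fin n) (Fin n) ℝ := P * Fᵀ * Pp⁻¹
    let Pjoint : Matrix (Fin n ⊕ Fin n) (Fin n ⊕ Fin n) ℝ := fromBlocks P (P * Fᵀ) (F * P) Pp
    let A : Matrix ((Fin n ⊕ Fin n) ⊕ (Fin n ⊕ Fin n)) (Fin n ⊕ Fin n) ℝ :=
      fromRows 1 (fromBlocks 0 1 0 1)
    let b : ((Fin n ⊕ Fin n) ⊕ (Fin n ⊕ Fin n)) → ℝ := Sum.elim (Sum.elim 0 z) (Sum.elim z 0)
    let W : Matrix ((Fin n ⊕ Fin n) ⊕ (Fin n ⊕ Fin n)) ((Fin n ⊕ Fin n) ⊕ (Fin n ⊕ Fin n)) ℝ :=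
      fromBlocks Pjoint⁻¹ 0 0 (fromBlocks (-Pp⁻¹) 0 0 Ps⁻¹)
    let M : Matrix (Fin n ⊕ Fin n) (Fin n ⊕ Fin n) ℝ := Aᵀ * W * A
    let δstar : Fin n ⊕ Fin n → ℝ := Sum.elim (G *ᵥ z) 0
    IsUnit M ∧ M *ᵥ δstar + (Aᵀ * W) *ᵥ b = 0 ∧
      ∀ δ : Fin n ⊕ Fin n → ℝ, M *ᵥ δ + (Aᵀ * W) *ᵥ b = 0 → δ = δstar := by
  intro Pp G Pjoint A b W M δstar
  have hPpdef : Pp = F * P * Fᵀ + Q := rfl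
  have hGdef : G = P * Fᵀ * Pp⁻¹ := rfl
  have hPjdef : Pjoint = fromBlocks P (P * Fᵀ) (F * P) Pp := rfl
  have hAdef : A = fromRows 1 (fromBlocks 0 1 0 1) := rfl
  have hbdef : b = Sum.elim (Sum.elim (0 : Fin n → ℝ) z) (Sum.elim z (0 : Fin n → ℝ)) := rfl
  have hWdef : W = fromBlocks Pjoint⁻¹ 0 0 (fromBlocks (-Pp⁻¹) 0 0 Ps⁻¹) := rfl
  have hMdef : M = Aᵀ * W * A := rfl
  have hδdef : δstar = Sum.elim (G *ᵥ z) (0 : Fin n → ℝ) := rfl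
  clear_value Pp G Pjoint A b W M δstar
  -- basic positivity / invertibility facts
  have hFPFt : (F * P * Fᵀ).PosSemidef := by
    simpa [Matrix.conjTranspose_eq_transpose_of_trivial] using
      hP.posSemidef.mul_mul_conjTranspose_same F
  have hPp : Pp.PosDef := hPpdef ▸ Matrix.PosDef.posSemidef_add hFPFt hQ
  haveI iP : Invertible P := hP.isUnit.invertible
  haveI iQ : Invertible Q := hQ.isUnit.invertible
  haveI iPp : Invertible Pp := hPp.isUnit.invertible
  haveI iPs : Invertible Ps := hPs.isUnit.invertible
  -- symmetry facts
  have hPt : Pᵀ = P := by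
    simpa [Matrix.conjTranspose_eq_transpose_of_trivial] using hP.isHermitian.eq
  have hPit : (P⁻¹)ᵀ = P⁻¹ := by rw [Matrix.transpose_nonsing_inv, hPt]
  have hQit : (Q⁻¹)ᵀ = Q⁻¹ := by
    rw [Matrix.transpose_nonsing_inv]
    congr 1
    simpa [Matrix.conjTranspose_eq_transpose_of_trivial] using hQ.isHermitian.eq
  have hPpit : (Pp⁻¹)ᵀ = Pp⁻¹ := by
    rw [Matrix.transpose_nonsing_inv]
    congr 1
    simpa [Matrix.conjTranspose_eq_transpose_of_trivial] using hPp.isHermitian.eq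
  -- abbreviations
  set S : Matrix (Fin n) (Fin n) ℝ := P⁻¹ + Fᵀ * Q⁻¹ * F with hSdef
  have hS : S.PosDef := by
    have h2 : (Fᵀ * Q⁻¹ * F).PosSemidef := by
      simpa [Matrix.conjTranspose_eq_transpose_of_trivial] using
        hQ.inv.posSemidef.conjTranspose_mul_mul_same F
    exact Matrix.PosDef.add_posSemidef hP.inv h2
  haveI iS : Invertible S := hS.isUnit.invertible
  haveI iPsi : Invertible (Ps⁻¹) := hPs.inv.isUnit.invertible
  -- key identities
  have key1 : S * G = Fᵀ * Q⁻¹ := by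
    have h : S * (P * Fᵀ) = Fᵀ * Q⁻¹ * Pp := by
      rw [hSdef, hPpdef]
      simp [Matrix.mul_add, Matrix.add_mul, mul_assoc, add_comm]
    rw [hGdef, ← mul_assoc, h, mul_assoc, Matrix.mul_inv_of_invertible, mul_one]
  have key2 : Q⁻¹ * F * G = Q⁻¹ - Pp⁻¹ := by
    have h : F * P * Fᵀ = Pp - Q := by rw [hPpdef, add_sub_cancel_right]
    calc Q⁻¹ * F * G = Q⁻¹ * (F * P * Fᵀ) * Pp⁻¹ := by
          rw [hGdef]; noncomm_ring
      _ = Q⁻¹ * (Pp - Q) * Pp⁻¹ := by rw [h]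
      _ = Q⁻¹ - Pp⁻¹ := by
          simp [Matrix.mul_sub, Matrix.sub_mul, mul_assoc]
  have key2' : Q⁻¹ * (F * G) = Q⁻¹ - Pp⁻¹ := by rw [← mul_assoc, key2]
  -- the inverse of the joint covariance
  set J : Matrix (Fin n ⊕ Fin n) (Fin n ⊕ Fin n) ℝ :=
    fromBlocks S (-(Fᵀ * Q⁻¹)) (-(Q⁻¹ * F)) Q⁻¹ with hJdef
  have hb11 : P * S + (P * Fᵀ) * (-(Q⁻¹ * F)) = 1 := by
    rw [hSdef]; simp [Matrix.mul_add, mul_assoc]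
  have hb12 : P * (-(Fᵀ * Q⁻¹)) + (P * Fᵀ) * Q⁻¹ = 0 := by
    simp [mul_assoc]
  have hb21 : F * P * S + Pp * (-(Q⁻¹ * F)) = 0 := by
    rw [hSdef, hPpdef]
    simp [Matrix.mul_add, Matrix.add_mul, mul_assoc]
    abel
  have hb22 : F * P * (-(Fᵀ * Q⁻¹)) + Pp * Q⁻¹ = 1 := by
    rw [hPpdef]
    simp [Matrix.add_mul, mul_assoc]
  have hJ : Pjoint * J = 1 := by
    rw [hPjdef, hJdef, fromBlocks_multiply, hb11, hb12, hb21, hb22, fromBlocks_one]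
  have hW1 : Pjoint⁻¹ = J := Matrix.inv_eq_right_inv hJ
  -- the matrix M in block form
  have hAW : Aᵀ * W = fromCols J (fromBlocks 0 0 (-Pp⁻¹) Ps⁻¹) := by
    rw [hAdef, hWdef, hW1, transpose_fromRows, transpose_one, fromBlocks_transpose,
      fromCols_mul_fromBlocks]
    simp [fromBlocks_multiply]
  have hM : M = fromBlocks S (-(Fᵀ * Q⁻¹)) (-(Q⁻¹ * F)) (Q⁻¹ + (-Pp⁻¹ + Ps⁻¹)) := by
    rw [hMdef, hAW, hAdef, fromCols_mul_fromRows, hJdef, fromBlocks_multiply,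
      mul_one, fromBlocks_add]
    simp
  -- M = Cᵀ D C with C, D invertible
  set C : Matrix (Fin n ⊕ Fin n) (Fin n ⊕ Fin n) ℝ := fromBlocks 1 (-G) 0 1 with hCdef
  set D : Matrix (Fin n ⊕ Fin n) (Fin n ⊕ Fin n) ℝ := fromBlocks S 0 0 Ps⁻¹ with hDdef
  have hSt : Sᵀ = S := by
    rw [hSdef]
    simp [Matrix.transpose_add, Matrix.transpose_mul, hQit, hPit, mul_assoc]
  have hGtS : Gᵀ * S = Q⁻¹ * F := by
    have h := congrArg Matrix.transpose key1
    rw [Matrix.transpose_mul, Matrix.transpose_mul, hSt, hQit,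
      Matrix.transpose_transpose] at h
    exact h
  have hGtSG : Gᵀ * S * G = Q⁻¹ - Pp⁻¹ := by rw [hGtS, key2]
  have hMfact : M = Cᵀ * D * C := by
    rw [hM, hCdef, hDdef, fromBlocks_transpose, fromBlocks_multiply, fromBlocks_multiply]
    simp [key1, hGtS, key2', mul_assoc, hSt]
    abel
  haveI i1 : Invertible (1 : Matrix (Fin n) (Fin n) ℝ) := invertibleOne
  haveI iC : Invertible C := by
    rw [hCdef]
    exact Matrix.fromBlocksZero₂₁Invertible (1 : Matrix (Fin n) (Fin n) ℝ) (-G) 1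
  haveI iD : Invertible D := by
    rw [hDdef]
    exact Matrix.fromBlocksZero₂₁Invertible S 0 (Ps⁻¹)
  have hMunit : IsUnit M := by
    rw [hMfact]
    exact ((isUnit_of_invertible Cᵀ).mul (isUnit_of_invertible D)).mul (isUnit_of_invertible C)
  -- stationarity
  have heq : M *ᵥ δstar + (Aᵀ * W) *ᵥ b = 0 := by
    rw [hM, hAW, hbdef, hδdef, fromBlocks_mulVec, fromCols_mulVec_sumElim, hJdef,
      fromBlocks_mulVec, fromBlocks_mulVec]
    funext i
    cases i with
    | inl i =>
        simp [Matrix.mulVec_mulVec, key1, Matrix.neg_mulVec]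
    | inr i =>
        simp [Matrix.mulVec_mulVec, key2, Matrix.neg_mulVec, Matrix.sub_mulVec]
        abel
  refine ⟨hMunit, heq, ?_⟩
  intro δ hδ
  have hinj : Function.Injective M.mulVec := Matrix.mulVec_injective_iff_isUnit.mpr hMunit
  apply hinj
  show M *ᵥ δ = M *ᵥ δstar
  rw [eq_neg_of_add_eq_zero_left hδ, eq_neg_of_add_eq_zero_left heq]
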